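/- On the square P₁ = [−1,0]×[0,1] ⊆ ℝ², the function g(x) = (1+‖x‖)² + ‖x−(0,1)‖² + ‖x−(−1,0)‖² attains its unique minimum at the point (−α, α) with α = (2−√2)/6. -/

import Mathlib

theorem stmt_12 :
    let P₁ : Set (EuclideanSpace ℝ (Fin 2)) :=
      {x | x 0 ∈ Set.Icc (-1:ℝ) 0 ∧ x 1 ∈ Set.Icc (0:ℝ) 1}
    let e₁ : EuclideanSpace ℝ (Fin 2) := WithLp.toLp 2 (fun i => if i = 0 then 1 else 0)
    let e₂ : EuclideanSpace ℝ (Fin 2) := WithLp.toLp 2 (fun i => if i = 0 then 0 else 1)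
    let α : ℝ := (2 - Real.sqrt 2) / 6
    let c : EuclideanSpace ℝ (Fin 2) := WithLp.toLp 2 (fun i => if i = 0 then -α else α)
    let g : EuclideanSpace ℝ (Fin 2) → ℝ := fun x =>
      (1 + ‖x‖) ^ 2 + ‖x - e₂‖ ^ 2 + ‖x + e₁‖ ^ 2
    c ∈ P₁ ∧ ∀ x ∈ P₁, x ≠ c → g c < g x := by
  intro P₁ e₁ e₂ α c g
  have hs : Real.sqrt 2 ^ 2 = 2 := Real.sq_sqrt (by norm_num)
  have hs0 : (0:ℝ) ≤ Real.sqrt 2 := Real.sqrt_nonneg 2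
  have hs2 : Real.sqrt 2 ≤ 2 := by nlinarith
  have hs1 : 1 ≤ Real.sqrt 2 := by nlinarith
  have hα0 : 0 ≤ α := by simp only [α]; nlinarith
  have hα1 : α ≤ 1 := by simp only [α]; nlinarith
  have hnorm : ∀ y : EuclideanSpace ℝ (Fin 2), ‖y‖ = Real.sqrt ((y 0)^2 + (y 1)^2) := by
    intro y; rw [EuclideanSpace.norm_eq]
    simp [Fin.sum_univ_two, Real.norm_eq_abs, sq_abs]
  constructor
  · exact ⟨⟨by simp [c]; linarith, by simp [c]; linarith⟩,
      ⟨by simp [c]; linarith, by simp [c]; linarith⟩⟩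
  · intro x hx hxc
    obtain ⟨⟨ha1, ha2⟩, hb1, hb2⟩ := hx
    set a := x 0 with ha
    set b := x 1 with hb
    set s := Real.sqrt 2 with hsdef
    -- norm of x
    set r := Real.sqrt (a^2 + b^2) with hrdef
    have hr0 : 0 ≤ r := Real.sqrt_nonneg _
    have hr2 : r ^ 2 = a^2 + b^2 := Real.sq_sqrt (by positivity)
    have hxn : ‖x‖ = r := by rw [hnorm]
    -- key inequality : b - a ≤ s * r
    have hkey : b - a ≤ s * r := by
      have h1 : s * r = Real.sqrt (2 * (a^2 + b^2)) := by
        rw [hrdef, hsdef, ← Real.sqrt_mul (by norm_num)]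
      have h2 : Real.sqrt ((b - a)^2) ≤ Real.sqrt (2 * (a^2 + b^2)) :=
        Real.sqrt_le_sqrt (by nlinarith [sq_nonneg (a + b)])
      have h3 : b - a ≤ Real.sqrt ((b - a)^2) := by
        rw [Real.sqrt_sq_eq_abs]; exact le_abs_self _
      linarith
    have hkey2 : s * (b - a) ≤ 2 * r := by
      have := mul_le_mul_of_nonneg_left hkey hs0
      calc s * (b - a) ≤ s * (s * r) := this
        _ = s ^ 2 * r := by ring
        _ = 2 * r := by rw [hs]
    -- norm computations for x
    have hx2 : ‖x - e₂‖ ^ 2 = a^2 + (b - 1)^2 := by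
      rw [hnorm, Real.sq_sqrt (by positivity)]; simp [e₂]; rfl
    have hx3 : ‖x + e₁‖ ^ 2 = (a + 1)^2 + b^2 := by
      rw [hnorm, Real.sq_sqrt (by positivity)]; simp [e₁]; rfl
    -- norm computations for c
    have hc0 : c 0 = -α := by simp [c]
    have hc1 : c 1 = α := by simp [c]
    have hcn : ‖c‖ = s * α := by
      rw [hnorm, hc0, hc1]
      have : (-α)^2 + α^2 = 2 * α^2 := by ring
      rw [this, Real.sqrt_mul (by norm_num), Real.sqrt_sq hα0]
    have hc2 : ‖c - e₂‖ ^ 2 = α^2 + (α - 1)^2 := by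
      rw [hnorm, Real.sq_sqrt (by positivity)]; simp [e₂, c]; try ring
    have hc3 : ‖c + e₁‖ ^ 2 = (1 - α)^2 + α^2 := by
      rw [hnorm, Real.sq_sqrt (by positivity)]; simp [e₁, c]; try ring
    -- x ≠ c gives positivity
    have hne : 0 < (a + α)^2 + (b - α)^2 := by
      rcases eq_or_ne a (-α) with h1 | h1
      · rcases eq_or_ne b α with h2 | h2
        · exact absurd ((WithLp.ext_iff (x := x) (y := c)).mpr (funext fun i => by
            fin_cases i
            · rw [hc0] at *; exact h1
            · rw [hc1] at *; exact h2)) hxc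
        · have hb' : b - α ≠ 0 := sub_ne_zero.mpr h2
          linarith [sq_nonneg (a + α), sq_pos_of_ne_zero hb']
      · have h2 : a + α ≠ 0 := fun h => h1 (by linarith)
        linarith [sq_nonneg (b - α), sq_pos_of_ne_zero h2]
    -- final computation
    have hαs : s = 2 - 6 * α := by simp only [α]; ring
    have hαq : 36*α^2 - 24*α + 2 = 0 := by
      simp only [α]
      have h2 : Real.sqrt 2 ^ 2 = 2 := Real.sq_sqrt (by norm_num)
      linear_combination h2
    have hαq2 : α^2 * (36*α^2 - 24*α + 2) = 0 := by rw [hαq]; ring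
    rw [hαs] at hkey2
    simp only [g, hxn, hx2, hx3, hcn, hc2, hc3, hαs]
    linarith [hne, hkey2, hr2, hαq2]
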